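/- There is a constant c₁ (not depending on e^{Q_n} and n) such that: if V_n ∈ L_n(m,M) with m = (2(1+e^{Q_n}))^{−1} and M = q²/2, and n is sufficiently large, then max_{i,j} |(V_n^{−1})_{ij} − (S_n)_{ij}| ≤ c₁(1+e^{Q_n})³/(n−1)², where (S_n)_{ij} = δ_{ij}/v_{ii}. -/

import Mathlib

open Finset Matrix

/-- The matrix class `L_n(m, M)`: symmetric nonnegative matrices whose diagonal entries equal
the corresponding off-diagonal row sums, with all off-diagonal entries in `[m, M]`. -/
def MatrixClassL (n : ℕ) (m M : ℝ) (V : Matrix (Fin n) (Fin n) ℝ) : Prop :=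
  V.IsSymm ∧ (∀ i, V i i = ∑ j ∈ Finset.univ.erase i, V i j) ∧
    ∀ i j, i ≠ j → m ≤ V i j ∧ V i j ≤ M

lemma split_diag {n : ℕ} (f : Fin n → ℝ) (i : Fin n) :
    ∑ j, f j = f i + ∑ j, if j = i then 0 else f j := by
  rw [← Finset.add_sum_erase _ f (Finset.mem_univ i)]
  congr 1
  rw [← Finset.filter_ne', Finset.sum_filter]
  exact Finset.sum_congr rfl fun j _ => by by_cases h : j = i <;> simp [h]

lemma sum_erase_ite {n : ℕ} (f : Fin n → ℝ) (i : Fin n) :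
    ∑ j ∈ Finset.univ.erase i, f j = ∑ j, if j = i then 0 else f j := by
  rw [← Finset.filter_ne', Finset.sum_filter]
  exact Finset.sum_congr rfl fun j _ => by by_cases h : j = i <;> simp [h]

lemma quad_lower {n : ℕ} {m : ℝ} (hm : 0 ≤ m) (V : Matrix (Fin n) (Fin n) ℝ)
    (hsym : ∀ i j, V j i = V i j)
    (hdiag : ∀ i, V i i = ∑ j, if j = i then 0 else V i j)
    (hlow : ∀ i j, i ≠ j → m ≤ V i j) (x : Fin n → ℝ) :
    m * ((n : ℝ) - 2) * (∑ i, x i ^ 2) ≤ x ⬝ᵥ V.mulVec x := by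
  have expand : x ⬝ᵥ V.mulVec x
      = ∑ i, ∑ j, (if j = i then 0 else V i j * (x i ^ 2 + x i * x j)) := by
    simp only [dotProduct, Matrix.mulVec, Finset.mul_sum]
    refine Finset.sum_congr rfl fun i _ => ?_
    calc ∑ j, x i * (V i j * x j)
        = x i * (V i i * x i) + ∑ j, if j = i then 0 else x i * (V i j * x j) :=
          split_diag _ i
      _ = (∑ j, if j = i then 0 else V i j) * x i ^ 2
          + ∑ j, if j = i then 0 else x i * (V i j * x j) := by
          rw [← hdiag i]; ring_nf
      _ = (∑ j, if j = i then 0 else V i j * x i ^ 2)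
          + ∑ j, if j = i then 0 else V i j * (x i * x j) := by
          rw [Finset.sum_mul]
          congr 1 <;> exact Finset.sum_congr rfl fun j _ => by
            by_cases h : j = i <;> simp [h] <;> ring
      _ = ∑ j, if j = i then 0 else V i j * (x i ^ 2 + x i * x j) := by
          rw [← Finset.sum_add_distrib]
          exact Finset.sum_congr rfl fun j _ => by
            by_cases h : j = i <;> simp [h] <;> ring
  have swap : ∑ i, ∑ j, (if j = i then 0 else V i j * x i ^ 2)
      = ∑ i, ∑ j, (if j = i then 0 else V i j * x j ^ 2) := by
    rw [Finset.sum_comm]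
    refine Finset.sum_congr rfl fun i _ => Finset.sum_congr rfl fun j _ => ?_
    by_cases h : i = j
    · simp [h]
    · rw [if_neg h, if_neg (Ne.symm h), hsym]
  have expand2 : 2 * (x ⬝ᵥ V.mulVec x)
      = ∑ i, ∑ j, (if j = i then 0 else V i j * (x i + x j) ^ 2) := by
    have e1 : ∀ i j : Fin n, (if j = i then 0 else V i j * (x i ^ 2 + x i * x j))
        = (if j = i then 0 else V i j * x i ^ 2)
          + (if j = i then 0 else V i j * (x i * x j)) := fun i j => by
      by_cases h : j = i <;> simp [h] <;> ring
    have e2 : ∀ i j : Fin n, (if j = i then 0 else V i j * (x i + x j) ^ 2)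
        = ((if j = i then 0 else V i j * x i ^ 2)
          + (if j = i then 0 else V i j * x j ^ 2))
          + (2 * (if j = i then 0 else V i j * (x i * x j))) := fun i j => by
      by_cases h : j = i <;> simp [h] <;> ring
    simp only [expand, e1, e2, Finset.sum_add_distrib, ← Finset.mul_sum]
    rw [← swap]; ring
  have lower : m * (∑ i, ∑ j, (if j = i then 0 else (x i + x j) ^ 2))
      ≤ ∑ i, ∑ j, (if j = i then 0 else V i j * (x i + x j) ^ 2) := by
    rw [Finset.mul_sum]
    refine Finset.sum_le_sum fun i _ => ?_
    rw [Finset.mul_sum]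
    refine Finset.sum_le_sum fun j _ => ?_
    by_cases h : j = i
    · simp [h]
    · simp only [if_neg h]
      exact mul_le_mul_of_nonneg_right (hlow i j (Ne.symm h)) (sq_nonneg _)
  have count : ∑ i, ∑ j, (if j = i then 0 else (x i + x j) ^ 2)
      = 2 * ((n : ℝ) - 2) * (∑ i, x i ^ 2) + 2 * (∑ i, x i) ^ 2 := by
    have e3 : ∀ i : Fin n, ∑ j, (if j = i then 0 else (x i + x j) ^ 2)
        = (∑ j, (x i + x j) ^ 2) - 4 * x i ^ 2 := fun i => by
      rw [split_diag (fun j => (x i + x j) ^ 2) i]; ring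
    have e4 : ∀ i : Fin n, (∑ j, (x i + x j) ^ 2)
        = (n : ℝ) * x i ^ 2 + 2 * x i * (∑ j, x j) + (∑ j, x j ^ 2) := fun i => by
      have h5 : ∀ j : Fin n, (x i + x j) ^ 2 = x i ^ 2 + (2 * x i) * x j + x j ^ 2 :=
        fun j => by ring
      simp only [h5, Finset.sum_add_distrib, Finset.sum_const, Finset.card_univ,
        Fintype.card_fin, nsmul_eq_mul, ← Finset.mul_sum]
      try ring
    calc ∑ i, ∑ j, (if j = i then 0 else (x i + x j) ^ 2)
        = ∑ i, ((n : ℝ) * x i ^ 2 + 2 * x i * (∑ j, x j) + (∑ j, x j ^ 2) - 4 * x i ^ 2) := by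
          refine Finset.sum_congr rfl fun i _ => ?_
          rw [e3 i, e4 i]
      _ = 2 * ((n : ℝ) - 2) * (∑ i, x i ^ 2) + 2 * (∑ i, x i) ^ 2 := by
          simp only [Finset.sum_sub_distrib, Finset.sum_add_distrib, Finset.sum_const,
            Finset.card_univ, Fintype.card_fin, nsmul_eq_mul, ← Finset.mul_sum,
            ← Finset.sum_mul]
          ring
  rw [count] at lower
  nlinarith [mul_nonneg hm (sq_nonneg (∑ i, x i))]

lemma inv_bilinear_sq {n : ℕ} {c : ℝ} (hc : 0 < c) (V : Matrix (Fin n) (Fin n) ℝ)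
    (hquad : ∀ x : Fin n → ℝ, c * (∑ i, x i ^ 2) ≤ x ⬝ᵥ V.mulVec x)
    (W : Matrix (Fin n) (Fin n) ℝ) (hVW : V * W = 1) (u w : Fin n → ℝ) :
    c ^ 2 * (u ⬝ᵥ W.mulVec w) ^ 2 ≤ (∑ i, u i ^ 2) * (∑ i, w i ^ 2) := by
  set y := W.mulVec w with hy_def
  have hy : V.mulVec y = w := by
    rw [hy_def, Matrix.mulVec_mulVec, hVW, Matrix.one_mulVec]
  have h1 : c * (∑ i, y i ^ 2) ≤ y ⬝ᵥ w := by
    have := hquad y; rwa [hy] at this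
  have hCS1 : (y ⬝ᵥ w) ^ 2 ≤ (∑ i, y i ^ 2) * (∑ i, w i ^ 2) := by
    simpa [dotProduct] using Finset.sum_mul_sq_le_sq_mul_sq Finset.univ y w
  have hynn : (0:ℝ) ≤ ∑ i, y i ^ 2 := Finset.sum_nonneg fun i _ => sq_nonneg _
  have hwnn : (0:ℝ) ≤ ∑ i, w i ^ 2 := Finset.sum_nonneg fun i _ => sq_nonneg _
  have hy2 : c ^ 2 * (∑ i, y i ^ 2) ≤ ∑ i, w i ^ 2 := by
    rcases eq_or_lt_of_le hynn with h | h
    · rw [← h]; simpa using hwnn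
    · have h0 : (0:ℝ) ≤ c * ∑ i, y i ^ 2 := by positivity
      have h2 : (c * ∑ i, y i ^ 2) ^ 2 ≤ (y ⬝ᵥ w) ^ 2 := pow_le_pow_left₀ h0 h1 2
      nlinarith
  have hCS2 : (u ⬝ᵥ y) ^ 2 ≤ (∑ i, u i ^ 2) * (∑ i, y i ^ 2) := by
    simpa [dotProduct] using Finset.sum_mul_sq_le_sq_mul_sq Finset.univ u y
  have hunn : (0:ℝ) ≤ ∑ i, u i ^ 2 := Finset.sum_nonneg fun i _ => sq_nonneg _
  calc c ^ 2 * (u ⬝ᵥ y) ^ 2 ≤ c ^ 2 * ((∑ i, u i ^ 2) * (∑ i, y i ^ 2)) := by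
        exact mul_le_mul_of_nonneg_left hCS2 (by positivity)
    _ = (∑ i, u i ^ 2) * (c ^ 2 * (∑ i, y i ^ 2)) := by ring
    _ ≤ (∑ i, u i ^ 2) * (∑ i, w i ^ 2) := mul_le_mul_of_nonneg_left hy2 hunn

lemma entry_identity {n : ℕ} (V W : Matrix (Fin n) (Fin n) ℝ)
    (hVW : V * W = 1) (hWV : W * V = 1) (hVpos : ∀ i, V i i ≠ 0) (i j : Fin n) :
    W i j - (if i = j then (V i i)⁻¹ else 0)
      = (-(if i = j then 0 else V i j)
          + ∑ k, ∑ l, (if i = l then 0 else V i l) * W l k * (if k = j then 0 else V k j))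
        / (V i i * V j j) := by
  set a : Fin n → Fin n → ℝ := fun s t => if s = t then 0 else V s t with ha
  have eq1 : ∀ p r : Fin n, V p p * W p r = (if p = r then 1 else 0) - ∑ k, a p k * W k r := by
    intro p r
    have h := congrFun (congrFun hVW p) r
    rw [Matrix.mul_apply, Matrix.one_apply] at h
    rw [split_diag (fun k => V p k * W k r) p] at h
    have e : ∀ k : Fin n, (if k = p then 0 else V p k * W k r) = a p k * W k r := fun k => by
      by_cases hk : k = p
      · simp [hk, ha]
      · simp [hk, ha, Ne.symm hk]
    rw [Finset.sum_congr rfl fun k _ => e k] at h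
    linarith
  have eq2 : ∀ p r : Fin n, W p r * V r r = (if p = r then 1 else 0) - ∑ k, W p k * a k r := by
    intro p r
    have h := congrFun (congrFun hWV p) r
    rw [Matrix.mul_apply, Matrix.one_apply] at h
    rw [split_diag (fun k => W p k * V k r) r] at h
    have e : ∀ k : Fin n, (if k = r then 0 else W p k * V k r) = W p k * a k r := fun k => by
      by_cases hk : k = r
      · simp [hk, ha]
      · simp [hk, ha]
    rw [Finset.sum_congr rfl fun k _ => e k] at h
    linarith
  have key : V i i * V j j * (W i j - (if i = j then (V i i)⁻¹ else 0))
      = -(a i j) + ∑ k, ∑ l, a i l * W l k * a k j := by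
    have d1 : V i i * V j j * (if i = j then (V i i)⁻¹ else 0)
        = if i = j then V j j else 0 := by
      by_cases h : i = j
      · subst h; rw [if_pos rfl, if_pos rfl]; field_simp
      · simp [h]
    calc V i i * V j j * (W i j - (if i = j then (V i i)⁻¹ else 0))
        = V i i * (W i j * V j j) - (if i = j then V j j else 0) := by
          rw [mul_sub, d1]; ring
      _ = V i i * ((if i = j then 1 else 0) - ∑ k, W i k * a k j)
          - (if i = j then V j j else 0) := by rw [eq2 i j]
      _ = (if i = j then V i i - V j j else 0) - ∑ k, (V i i * W i k) * a k j := by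
          rw [mul_sub, Finset.mul_sum]
          have hs : ∑ k, V i i * (W i k * a k j) = ∑ k, (V i i * W i k) * a k j :=
            Finset.sum_congr rfl fun k _ => by ring
          rw [hs]
          split_ifs with h
          · subst h; ring
          · ring
      _ = - ∑ k, (((if i = k then 1 else 0) - ∑ l, a i l * W l k) * a k j) := by
          have hs2 : ∑ k, (V i i * W i k) * a k j
              = ∑ k, (((if i = k then 1 else 0) - ∑ l, a i l * W l k) * a k j) :=
            Finset.sum_congr rfl fun k _ => by rw [eq1 i k]
          rw [hs2]
          split_ifs with h
          · subst h; ring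
          · ring
      _ = -(a i j) + ∑ k, ∑ l, a i l * W l k * a k j := by
          have e : ∀ k : Fin n, (((if i = k then 1 else 0) - ∑ l, a i l * W l k) * a k j)
              = (if i = k then a k j else 0) - ∑ l, a i l * W l k * a k j := fun k => by
            rw [sub_mul, Finset.sum_mul]
            by_cases h : i = k <;> simp [h]
          rw [Finset.sum_congr rfl fun k _ => e k, Finset.sum_sub_distrib,
            Finset.sum_ite_eq Finset.univ i (fun k => a k j)]
          simp only [Finset.mem_univ, if_true]
          ring
  have hne : V i i * V j j ≠ 0 := mul_ne_zero (hVpos i) (hVpos j)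
  rw [eq_div_iff hne]
  rw [← key]; ring

lemma numeric_final (nn P Mv : ℝ) (hn : 3 ≤ nn) (hP : 2 ≤ P) (hM : 2 ≤ Mv) :
    (Mv + nn*Mv^2/((2*P)⁻¹*(nn-2))) / ((nn-1)*(2*P)⁻¹ * ((nn-1)*(2*P)⁻¹))
      ≤ 28*Mv^2 * P^3 / (nn-1)^2 := by
  have hP0 : (0:ℝ) < P := by linarith
  have hm0 : (0:ℝ) < (2*P)⁻¹ := by positivity
  have hc0 : (0:ℝ) < (2*P)⁻¹*(nn-2) := by apply mul_pos hm0; linarith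
  have hstep1 : nn*Mv^2/((2*P)⁻¹*(nn-2)) ≤ 6*P*Mv^2 := by
    rw [div_le_iff₀ hc0]
    have he : 6*P*Mv^2*((2*P)⁻¹*(nn-2)) = 3*Mv^2*(nn-2) := by
      field_simp; ring
    rw [he]
    nlinarith [sq_nonneg Mv]
  have hstep2 : Mv ≤ P*Mv^2 := by nlinarith
  have hden : (nn-1)*(2*P)⁻¹*((nn-1)*(2*P)⁻¹) = (nn-1)^2/(4*P^2) := by
    field_simp; ring
  rw [hden, div_div_eq_mul_div]
  have ht : 28*Mv^2*P^3 = 7*P*Mv^2*(4*P^2) := by ring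
  rw [ht]
  have hd2 : (0:ℝ) < (nn-1)^2 := by nlinarith
  rw [div_le_div_iff_of_pos_right hd2]
  have h4 : (0:ℝ) ≤ 4*P^2 := by positivity
  exact mul_le_mul_of_nonneg_right (by linarith) h4


/-- There is a constant `c₁` (independent of `e^{Q_n}` and `n`) such that for all
sufficiently large `n`, every `V ∈ L_n((2(1+e^{Q_n}))⁻¹, q²/2)` is invertible and
`max_{i,j} |(V⁻¹)_{ij} - (S_n)_{ij}| ≤ c₁ (1+e^{Q_n})³/(n-1)²`, where `(S_n)_{ij} = δ_{ij}/v_{ii}`. -/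
theorem inverse_approximation_S (q : ℕ) (hq : 2 ≤ q) :
    ∃ c₁ : ℝ, 0 < c₁ ∧ ∃ N : ℕ, ∀ n : ℕ, N ≤ n →
      ∀ Q : ℝ, 0 < Q →
      ∀ V : Matrix (Fin n) (Fin n) ℝ,
        MatrixClassL n (2 * (1 + Real.exp Q))⁻¹ ((q : ℝ) ^ 2 / 2) V →
        IsUnit V.det ∧
        ∀ i j : Fin n,
          |V⁻¹ i j - (if i = j then (V i i)⁻¹ else 0)|
            ≤ c₁ * (1 + Real.exp Q) ^ 3 / ((n : ℝ) - 1) ^ 2 := by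
  have hq2 : (2:ℝ) ≤ (q:ℝ) := by exact_mod_cast hq
  refine ⟨7 * (q:ℝ)^4, by have := pow_pos (show (0:ℝ) < (q:ℝ) by linarith) 4; linarith, 3,
    fun n hn Q hQ V hV => ?_⟩
  obtain ⟨hsymm, hdiag0, hbound⟩ := hV
  set E := Real.exp Q with hE_def
  have hE : 2 ≤ 1 + E := by
    have := Real.one_le_exp hQ.le; linarith
  set m : ℝ := (2 * (1 + E))⁻¹ with hm_def
  have hm : 0 < m := by rw [hm_def]; positivity
  set M : ℝ := (q:ℝ)^2/2 with hM_def
  have hM : 2 ≤ M := by rw [hM_def]; nlinarith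
  have hn3 : (3:ℝ) ≤ (n:ℝ) := by exact_mod_cast hn
  have hVsym : ∀ i j, V j i = V i j := hsymm.apply
  have hdiag : ∀ i, V i i = ∑ j, if j = i then 0 else V i j := fun i => by
    rw [hdiag0 i, sum_erase_ite]
  have hoff_low : ∀ i j, i ≠ j → m ≤ V i j := fun i j h => (hbound i j h).1
  have hoff_abs : ∀ i j, |if i = j then 0 else V i j| ≤ M := fun i j => by
    by_cases h : i = j
    · rw [if_pos h, abs_zero]; linarith
    · rw [if_neg h, abs_of_nonneg (le_trans hm.le (hbound i j h).1)]
      exact (hbound i j h).2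
  have hdlow : ∀ i, ((n:ℝ)-1) * m ≤ V i i := fun i => by
    rw [hdiag0 i]
    have hcard : ((Finset.univ.erase i).card : ℝ) = (n:ℝ) - 1 := by
      rw [Finset.card_erase_of_mem (Finset.mem_univ i), Finset.card_univ, Fintype.card_fin]
      have h1 : 1 ≤ n := by omega
      push_cast [h1]; ring
    calc ((n:ℝ)-1) * m = (Finset.univ.erase i).card • m := by
          rw [nsmul_eq_mul, hcard]
      _ ≤ ∑ j ∈ Finset.univ.erase i, V i j := by
          refine Finset.card_nsmul_le_sum _ _ _ fun j hj => ?_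
          exact hoff_low i j (Ne.symm (Finset.ne_of_mem_erase hj))
  have hdpos : ∀ i, 0 < V i i := fun i =>
    lt_of_lt_of_le (mul_pos (show (0:ℝ) < (n:ℝ)-1 by linarith) hm) (hdlow i)
  set c : ℝ := m * ((n:ℝ) - 2) with hc_def
  have hc : 0 < c := by rw [hc_def]; apply mul_pos hm; linarith
  have hquad : ∀ x : Fin n → ℝ, c * (∑ i, x i ^ 2) ≤ x ⬝ᵥ V.mulVec x := fun x =>
    quad_lower hm.le V hVsym hdiag hoff_low x
  have hherm : V.IsHermitian := by
    rw [Matrix.IsHermitian, Matrix.conjTranspose_eq_transpose_of_trivial]; exact hsymm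
  have hPD : V.PosDef := by
    refine Matrix.posDef_iff_dotProduct_mulVec.mpr ⟨hherm, fun x hx => ?_⟩
    have h1 := hquad x
    have h2 : 0 < ∑ i, x i ^ 2 := by
      obtain ⟨i, hi⟩ : ∃ i, x i ≠ 0 := by
        by_contra h; push_neg at h; exact hx (funext h)
      exact Finset.sum_pos' (fun j _ => sq_nonneg _) ⟨i, Finset.mem_univ i, by positivity⟩
    have h3 : 0 < c * ∑ i, x i ^ 2 := mul_pos hc h2
    rw [star_trivial]
    exact lt_of_lt_of_le h3 h1
  have hu : IsUnit V.det := isUnit_iff_ne_zero.mpr (ne_of_gt hPD.det_pos)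
  refine ⟨hu, fun i j => ?_⟩
  set W := V⁻¹ with hW_def
  have hVW : V * W = 1 := Matrix.mul_nonsing_inv V hu
  have hWV : W * V = 1 := Matrix.nonsing_inv_mul V hu
  have hid := entry_identity V W hVW hWV (fun i => (hdpos i).ne') i j
  set u : Fin n → ℝ := fun l => if i = l then 0 else V i l with hu_def
  set w : Fin n → ℝ := fun k => if k = j then 0 else V k j with hw_def
  have hsq : ∀ v : Fin n → ℝ, (∀ l, |v l| ≤ M) → ∑ l, v l ^ 2 ≤ (n:ℝ) * M^2 := by
    intro v hv
    calc ∑ l, v l ^ 2 ≤ ∑ _l : Fin n, M^2 := by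
          refine Finset.sum_le_sum fun l _ => ?_
          rw [← sq_abs]
          exact pow_le_pow_left₀ (abs_nonneg _) (hv l) 2
      _ = (n:ℝ) * M^2 := by
          rw [Finset.sum_const, Finset.card_univ, Fintype.card_fin, nsmul_eq_mul]
  have hsum_u : ∑ l, u l ^ 2 ≤ (n:ℝ) * M^2 := hsq u fun l => hoff_abs i l
  have hsum_w : ∑ l, w l ^ 2 ≤ (n:ℝ) * M^2 := hsq w fun l => hoff_abs l j
  have hbil := inv_bilinear_sq hc V hquad W hVW u w
  have hnM : (0:ℝ) ≤ (n:ℝ) * M^2 := by positivity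
  have hT : |u ⬝ᵥ W.mulVec w| ≤ (n:ℝ) * M^2 / c := by
    have h1 : (c * (u ⬝ᵥ W.mulVec w))^2 ≤ ((n:ℝ)*M^2)^2 := by
      have hwnn : (0:ℝ) ≤ ∑ l, w l ^ 2 := Finset.sum_nonneg fun l _ => sq_nonneg _
      calc (c * (u ⬝ᵥ W.mulVec w))^2 = c^2 * (u ⬝ᵥ W.mulVec w)^2 := by ring
        _ ≤ (∑ l, u l ^ 2) * (∑ l, w l ^ 2) := hbil
        _ ≤ ((n:ℝ)*M^2) * ((n:ℝ)*M^2) := mul_le_mul hsum_u hsum_w hwnn hnM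
        _ = ((n:ℝ)*M^2)^2 := (sq _).symm
    have h2 : |c * (u ⬝ᵥ W.mulVec w)| ≤ (n:ℝ)*M^2 := by
      have h3 := Real.sqrt_le_sqrt h1
      rwa [Real.sqrt_sq_eq_abs, Real.sqrt_sq hnM] at h3
    rw [abs_mul, abs_of_pos hc] at h2
    rw [le_div_iff₀ hc]
    linarith
  have hsum_eq : ∑ k, ∑ l, u l * W l k * w k = u ⬝ᵥ W.mulVec w := by
    simp only [dotProduct, Matrix.mulVec, Finset.mul_sum]
    rw [Finset.sum_comm]
    exact Finset.sum_congr rfl fun k _ => Finset.sum_congr rfl fun l _ => by ring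
  have hnum : |(-(if i = j then 0 else V i j) + ∑ k, ∑ l, u l * W l k * w k)|
      ≤ M + (n:ℝ)*M^2/c := by
    refine (abs_add_le _ _).trans ?_
    rw [abs_neg, hsum_eq]
    exact add_le_add (hoff_abs i j) hT
  have hdenlow : ((n:ℝ)-1)*m * (((n:ℝ)-1)*m) ≤ V i i * V j j := by
    have h1 : (0:ℝ) ≤ ((n:ℝ)-1)*m :=
      (mul_pos (show (0:ℝ) < (n:ℝ)-1 by linarith) hm).le
    exact mul_le_mul (hdlow i) (hdlow j) h1 (hdpos i).le
  have hdenpos : (0:ℝ) < ((n:ℝ)-1)*m * (((n:ℝ)-1)*m) := by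
    have h1 : (0:ℝ) < ((n:ℝ)-1)*m :=
      mul_pos (show (0:ℝ) < (n:ℝ)-1 by linarith) hm
    positivity
  have habs : |W i j - (if i = j then (V i i)⁻¹ else 0)|
      ≤ (M + (n:ℝ)*M^2/c) / (((n:ℝ)-1)*m * (((n:ℝ)-1)*m)) := by
    rw [hid, abs_div, abs_of_pos (mul_pos (hdpos i) (hdpos j))]
    exact div_le_div₀ (le_trans (abs_nonneg _) hnum) hnum hdenpos hdenlow
  refine habs.trans ?_
  have h28 : 7*(q:ℝ)^4 * (1 + E)^3 / ((n:ℝ)-1)^2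
      = 28*M^2 * (1+E)^3 / ((n:ℝ)-1)^2 := by
    rw [hM_def]; ring
  rw [h28, hc_def, hm_def]
  exact numeric_final (n:ℝ) (1+E) M hn3 hE hM
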